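/- Let A be a symmetric nonnegative matrix (adjacency matrix of a simple graph) that maximizes the spectral radius λ₁ over the set M(D) of adjacency matrices of simple graphs with fixed degree sequence D, and let X be a nonnegative unit principal eigenvector of A. Then the entries of X are ordered consistently with the degrees: for all vertices i, j, if d_i > d_j then x_i ≥ x_j. -/

import Mathlib

open Finset

/-- The largest eigenvalue of a real symmetric matrix, via its Rayleigh-quotient
characterization `λ₁(A) = max_{‖x‖₂ = 1} xᵀ A x`. -/
noncomputable def lam1 {n : ℕ} (A : Matrix (Fin n) (Fin n) ℝ) : ℝ :=
  sSup {r | ∃ x : Fin n → ℝ, (∑ u, x u ^ 2) = 1 ∧ r = dotProduct x (A.mulVec x)}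

/-- `M(D)`: symmetric (0,1)-matrices with zero diagonal and row sums `D`. -/
def MemMD {n : ℕ} (D : Fin n → ℕ) (A : Matrix (Fin n) (Fin n) ℝ) : Prop :=
  (∀ u v, A u v = 0 ∨ A u v = 1) ∧ A.IsSymm ∧ (∀ u, A u u = 0) ∧
  (∀ u, ∑ v, A u v = (D u : ℝ))

private lemma sum_split {N : ℕ} {u v : Fin N} (huv : u ≠ v) (f : Fin N → ℝ) :
    ∑ a, f a = f u + f v + ∑ a ∈ Finset.univ \ {u, v}, f a := by
  rw [← Finset.sum_sdiff (Finset.subset_univ ({u, v} : Finset (Fin N))),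
    Finset.sum_pair huv]
  ring

private lemma quad_bound {N : ℕ} (C : Matrix (Fin N) (Fin N) ℝ)
    (hC : ∀ a b, C a b = 0 ∨ C a b = 1)
    (z : Fin N → ℝ) (hz : (∑ t, z t ^ 2) = 1) :
    dotProduct z (C.mulVec z) ≤ (N : ℝ) := by
  have habs : ∀ a b : Fin N, z a * (C a b * z b) ≤ |z a| * |z b| := by
    intro a b
    calc z a * (C a b * z b) ≤ |z a * (C a b * z b)| := le_abs_self _
      _ = |z a| * (|C a b| * |z b|) := by rw [abs_mul, abs_mul]
      _ ≤ |z a| * (1 * |z b|) := by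
          have h1 : |C a b| ≤ 1 := by rcases hC a b with h | h <;> simp [h]
          have := mul_le_mul_of_nonneg_right h1 (abs_nonneg (z b))
          exact mul_le_mul_of_nonneg_left this (abs_nonneg (z a))
      _ = |z a| * |z b| := by ring
  have h1 : dotProduct z (C.mulVec z) = ∑ a, ∑ b, z a * (C a b * z b) := by
    simp [dotProduct, Matrix.mulVec, Finset.mul_sum]
  rw [h1]
  have h2 : ∑ a, ∑ b, z a * (C a b * z b) ≤ ∑ a : Fin N, ∑ b : Fin N, |z a| * |z b| := by
    apply Finset.sum_le_sum; intro a _; apply Finset.sum_le_sum; intro b _; exact habs a b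
  refine h2.trans ?_
  have h3 : ∑ a : Fin N, ∑ b : Fin N, |z a| * |z b| = (∑ a : Fin N, |z a|) ^ 2 := by
    rw [sq, Finset.sum_mul_sum]
  rw [h3]
  have h4 := sq_sum_le_card_mul_sum_sq (s := (Finset.univ : Finset (Fin N)))
    (f := fun a => |z a|)
  simp only [Finset.card_univ, Fintype.card_fin, sq_abs] at h4
  calc (∑ a : Fin N, |z a|) ^ 2 ≤ (N : ℝ) * ∑ a, z a ^ 2 := by exact_mod_cast h4
    _ = N := by rw [hz, mul_one]

private lemma dot_symm {N : ℕ} (M : Matrix (Fin N) (Fin N) ℝ)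
    (hsym : ∀ a b, M a b = M b a) (w y : Fin N → ℝ) :
    dotProduct w (M.mulVec y) = dotProduct y (M.mulVec w) := by
  simp only [dotProduct, Matrix.mulVec, Finset.mul_sum]
  rw [Finset.sum_comm]
  apply Finset.sum_congr rfl
  intro a _
  apply Finset.sum_congr rfl
  intro b _
  rw [hsym b a]
  ring

private lemma eig_of_max {N : ℕ} (B : Matrix (Fin N) (Fin N) ℝ)
    (hsym : ∀ a b, B a b = B b a) (μ : ℝ)
    (hb : ∀ z : Fin N → ℝ, (∑ t, z t ^ 2) = 1 → dotProduct z (B.mulVec z) ≤ μ)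
    (y : Fin N → ℝ) (hy : (∑ t, y t ^ 2) = 1)
    (hμ : dotProduct y (B.mulVec y) = μ) : B.mulVec y = μ • y := by
  have hscale : ∀ z : Fin N → ℝ,
      dotProduct z (B.mulVec z) ≤ μ * ∑ t, z t ^ 2 := by
    intro z
    set s : ℝ := ∑ t, z t ^ 2 with hs
    have hs0 : 0 ≤ s := Finset.sum_nonneg fun t _ => sq_nonneg _
    rcases eq_or_lt_of_le hs0 with h0 | hpos
    · have hz0 : ∀ t, z t = 0 := by
        intro t
        have h2 := (Finset.sum_eq_zero_iff_of_nonneg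
          (fun t (_ : t ∈ Finset.univ) => sq_nonneg (z t))).1 h0.symm t (Finset.mem_univ t)
        exact pow_eq_zero_iff two_ne_zero |>.1 h2
      have hdz : dotProduct z (B.mulVec z) = 0 := by
        apply Finset.sum_eq_zero
        intro t _
        rw [hz0 t]; ring
      rw [hdz, ← h0, mul_zero]
    · set c : ℝ := (Real.sqrt s)⁻¹ with hc
      have hsq : Real.sqrt s > 0 := Real.sqrt_pos.2 hpos
      have hsqs : Real.sqrt s ^ 2 = s := Real.sq_sqrt hs0
      have hc2 : c ^ 2 * s = 1 := by
        rw [hc, inv_pow, hsqs, inv_mul_cancel₀ hpos.ne']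
      have hz' : (∑ t, (c • z) t ^ 2) = 1 := by
        simp only [Pi.smul_apply, smul_eq_mul, mul_pow, ← Finset.mul_sum]
        rw [← hs, hc2]
      have hq := hb (c • z) hz'
      have hexp : dotProduct (c • z) (B.mulVec (c • z))
          = c ^ 2 * dotProduct z (B.mulVec z) := by
        rw [Matrix.mulVec_smul, dotProduct_smul, smul_dotProduct]
        simp [smul_eq_mul]; ring
      rw [hexp] at hq
      have hc2pos : 0 < c ^ 2 := by positivity
      calc dotProduct z (B.mulVec z)
          = (c ^ 2 * s) * dotProduct z (B.mulVec z) := by rw [hc2]; ring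
        _ = (c ^ 2 * dotProduct z (B.mulVec z)) * s := by ring
        _ ≤ μ * s := mul_le_mul_of_nonneg_right hq hs0
  set M : Matrix (Fin N) (Fin N) ℝ := μ • (1 : Matrix (Fin N) (Fin N) ℝ) - B with hM
  have hMmul : ∀ z, M.mulVec z = μ • z - B.mulVec z := by
    intro z
    rw [hM, Matrix.sub_mulVec, Matrix.smul_mulVec, Matrix.one_mulVec]
  have hMsym : ∀ a b, M a b = M b a := by
    intro a b
    by_cases h : a = b
    · rw [h]
    · simp [hM, Matrix.sub_apply, Matrix.smul_apply, Matrix.one_apply, h, Ne.symm h,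
        hsym a b]
  have hMdot : ∀ z, dotProduct z (M.mulVec z)
      = μ * (∑ t, z t ^ 2) - dotProduct z (B.mulVec z) := by
    intro z
    rw [hMmul, dotProduct_sub, dotProduct_smul]
    congr 1
    simp [dotProduct, smul_eq_mul, Finset.mul_sum, sq]
  have hpsd : ∀ z, 0 ≤ dotProduct z (M.mulVec z) := by
    intro z
    rw [hMdot]
    linarith [hscale z]
  have hy0 : dotProduct y (M.mulVec y) = 0 := by
    rw [hMdot, hy, hμ]; ring
  have hMy : M.mulVec y = 0 := by
    funext a
    have key : ∀ w : Fin N → ℝ, dotProduct w (M.mulVec y) = 0 := by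
      intro w
      set cc : ℝ := dotProduct w (M.mulVec y) with hcc
      set dd : ℝ := dotProduct w (M.mulVec w) with hdd
      have hdd0 : 0 ≤ dd := hpsd w
      by_contra hne
      have hquad : ∀ t : ℝ, 0 ≤ 2 * t * cc + t ^ 2 * dd := by
        intro t
        have h := hpsd (y + t • w)
        have hexp : dotProduct (y + t • w) (M.mulVec (y + t • w))
            = dotProduct y (M.mulVec y) + 2 * t * cc + t ^ 2 * dd := by
          rw [Matrix.mulVec_add, Matrix.mulVec_smul]
          rw [add_dotProduct, dotProduct_add, dotProduct_add]
          rw [smul_dotProduct, dotProduct_smul, dotProduct_smul,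
            smul_dotProduct]
          have hsymm' : dotProduct y (M.mulVec w)
              = dotProduct w (M.mulVec y) := dot_symm M hMsym y w
          simp only [smul_eq_mul, hsymm', ← hcc, ← hdd]
          ring
        rw [hexp, hy0] at h
        linarith
      have hq2 := hquad (-cc / (dd + 1))
      have hdd1 : (0:ℝ) < dd + 1 := by linarith
      have hcc2 : 0 < cc ^ 2 := by positivity
      have hineq : 2 * (-cc / (dd + 1)) * cc + (-cc / (dd + 1)) ^ 2 * dd < 0 := by
        have heq : 2 * (-cc / (dd + 1)) * cc + (-cc / (dd + 1)) ^ 2 * dd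
            = -(cc ^ 2 * (dd + 2)) / (dd + 1) ^ 2 := by
          field_simp
          ring
        rw [heq]
        apply div_neg_of_neg_of_pos
        · nlinarith
        · positivity
      linarith
    have := key (Pi.single a 1)
    rwa [single_dotProduct, one_mul] at this
  funext a
  have h5 := congrFun hMy a
  rw [hMmul] at h5
  have h6 : μ • y a - B.mulVec y a = 0 := by
    simpa [Pi.sub_apply, Pi.smul_apply] using h5
  simp only [Pi.smul_apply, smul_eq_mul] at h6 ⊢
  linarith [h6]

/-- if `A` maximizes `λ₁` over `M(D)` and `X` is a nonnegative unit
principal eigenvector of `A`, then `d_i > d_j` implies `x_i ≥ x_j`. -/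
theorem stmt12 {n : ℕ} (D : Fin (n + 1) → ℕ) (A : Matrix (Fin (n + 1)) (Fin (n + 1)) ℝ)
    (hA : MemMD D A) (hmax : ∀ B, MemMD D B → lam1 B ≤ lam1 A)
    (X : Fin (n + 1) → ℝ) (hXnn : ∀ u, 0 ≤ X u) (hXunit : (∑ u, X u ^ 2) = 1)
    (hXeig : A.mulVec X = lam1 A • X) :
    ∀ u v : Fin (n + 1), D v < D u → X v ≤ X u := by
  classical
  intro u v huv
  by_contra hlt'
  push_neg at hlt'
  have hlt : X u < X v := hlt'
  obtain ⟨hA01, hAsymm, hAdiag, hArow⟩ := hA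
  have hs : ∀ a b : Fin (n + 1), A b a = A a b := by
    intro a b
    have h := congrFun (congrFun hAsymm a) b
    rwa [Matrix.transpose_apply] at h
  have hij : u ≠ v := by rintro rfl; exact lt_irrefl _ hlt
  -- the exclusive neighborhoods
  set S : Finset (Fin (n + 1)) :=
    Finset.univ.filter (fun w => w ≠ u ∧ w ≠ v ∧ A u w = 1 ∧ A v w = 0) with hSdef
  set T : Finset (Fin (n + 1)) :=
    Finset.univ.filter (fun w => w ≠ u ∧ w ≠ v ∧ A v w = 1 ∧ A u w = 0) with hTdef
  have hmemS : ∀ w, w ∈ S ↔ (w ≠ u ∧ w ≠ v ∧ A u w = 1 ∧ A v w = 0) := by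
    intro w; simp [hSdef]
  have hmemT : ∀ w, w ∈ T ↔ (w ≠ u ∧ w ≠ v ∧ A v w = 1 ∧ A u w = 0) := by
    intro w; simp [hTdef]
  set R : Finset (Fin (n + 1)) := Finset.univ \ {u, v} with hRdef
  have hmemR : ∀ w, w ∈ R ↔ (w ≠ u ∧ w ≠ v) := by
    intro w; simp [hRdef, not_or]
  have hSR : S ⊆ R := by
    intro w hw; rw [hmemR]; obtain ⟨h1, h2, _, _⟩ := (hmemS w).1 hw; exact ⟨h1, h2⟩
  have hTR : T ⊆ R := by
    intro w hw; rw [hmemR]; obtain ⟨h1, h2, _, _⟩ := (hmemT w).1 hw; exact ⟨h1, h2⟩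
  -- cardinality identity
  have hcardST : (S.card : ℝ) - T.card = (D u : ℝ) - D v := by
    have e1 : ∑ w, (A u w - A v w) = (D u : ℝ) - D v := by
      rw [Finset.sum_sub_distrib, hArow u, hArow v]
    have e2 : ∑ w, (A u w - A v w)
        = (A u u - A v u) + (A u v - A v v)
          + ∑ w ∈ R, (A u w - A v w) := by
      rw [sum_split hij (fun w => A u w - A v w), hRdef]
    have e3 : ∑ w ∈ R, (A u w - A v w)
        = ∑ w ∈ R, ((if w ∈ S then (1:ℝ) else 0) - (if w ∈ T then (1:ℝ) else 0)) := by
      apply Finset.sum_congr rfl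
      intro w hw
      obtain ⟨hwu, hwv⟩ := (hmemR w).1 hw
      rcases hA01 u w with h1 | h1 <;> rcases hA01 v w with h2 | h2
      · have hnS : w ∉ S := by rw [hmemS]; rintro ⟨_, _, h, _⟩; rw [h1] at h; norm_num at h
        have hnT : w ∉ T := by rw [hmemT]; rintro ⟨_, _, h, _⟩; rw [h2] at h; norm_num at h
        simp [h1, h2, hnS, hnT]
      · have hnS : w ∉ S := by rw [hmemS]; rintro ⟨_, _, h, _⟩; rw [h1] at h; norm_num at h
        have hT' : w ∈ T := by rw [hmemT]; exact ⟨hwu, hwv, h2, h1⟩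
        simp [h1, h2, hnS, hT']
      · have hS' : w ∈ S := by rw [hmemS]; exact ⟨hwu, hwv, h1, h2⟩
        have hnT : w ∉ T := by rw [hmemT]; rintro ⟨_, _, h, _⟩; rw [h2] at h; norm_num at h
        simp [h1, h2, hS', hnT]
      · have hnS : w ∉ S := by rw [hmemS]; rintro ⟨_, _, _, h⟩; rw [h2] at h; norm_num at h
        have hnT : w ∉ T := by rw [hmemT]; rintro ⟨_, _, _, h⟩; rw [h1] at h; norm_num at h
        simp [h1, h2, hnS, hnT]
    have e4 : ∑ w ∈ R, ((if w ∈ S then (1:ℝ) else 0) - (if w ∈ T then (1:ℝ) else 0))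
        = (S.card : ℝ) - T.card := by
      rw [Finset.sum_sub_distrib]
      rw [Finset.sum_ite_mem, Finset.sum_ite_mem]
      rw [Finset.inter_eq_right.2 hSR, Finset.inter_eq_right.2 hTR]
      simp
    have e5 : A u u - A v u + (A u v - A v v) = 0 := by
      rw [hAdiag u, hAdiag v, hs u v]; ring
    rw [e2, e3, e4, e5] at e1
    linarith [e1]
  set d : ℕ := D u - D v with hddef
  have hd1 : 1 ≤ d := by rw [hddef]; omega
  have hdcast : (d : ℝ) = (D u : ℝ) - D v := by
    rw [hddef]; push_cast [Nat.cast_sub huv.le]; ring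
  have hcard : S.card = T.card + d := by
    have : (S.card : ℝ) = (T.card : ℝ) + d := by rw [hdcast]; linarith [hcardST]
    exact_mod_cast this
  have hdS : d ≤ S.card := by omega
  have hSne : S.Nonempty := Finset.card_pos.1 (lt_of_lt_of_le hd1 hdS)
  obtain ⟨w₀, hw₀S, hw₀max⟩ := S.exists_max_image X hSne
  -- S₀ : d-element subset of S containing w₀
  obtain ⟨S₀', hS₀'sub, hS₀'card⟩ := Finset.exists_subset_card_eq
    (show d - 1 ≤ (S.erase w₀).card by rw [Finset.card_erase_of_mem hw₀S]; omega)
  set S₀ : Finset (Fin (n + 1)) := insert w₀ S₀' with hS₀def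
  have hw₀S₀ : w₀ ∈ S₀ := Finset.mem_insert_self _ _
  have hS₀sub : S₀ ⊆ S := by
    rw [hS₀def]
    exact Finset.insert_subset hw₀S (hS₀'sub.trans (Finset.erase_subset _ _))
  have hw₀notS₀' : w₀ ∉ S₀' := fun h => (Finset.notMem_erase w₀ S) (hS₀'sub h)
  have hS₀card : S₀.card = d := by
    rw [hS₀def, Finset.card_insert_of_notMem hw₀notS₀', hS₀'card]; omega
  have hS1card : (S \ S₀).card = T.card := by
    rw [Finset.card_sdiff_of_subset hS₀sub, hS₀card, hcard]; omega
  set Q : Finset (Fin (n + 1)) := (S \ S₀) ∪ T with hQdef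
  have hQR : Q ⊆ R := by
    rw [hQdef]
    exact Finset.union_subset ((Finset.sdiff_subset).trans hSR) hTR
  have hQnotuv : ∀ w ∈ Q, w ≠ u ∧ w ≠ v := fun w hw => (hmemR w).1 (hQR hw)
  have huQ : u ∉ Q := fun h => (hQnotuv u h).1 rfl
  have hvQ : v ∉ Q := fun h => (hQnotuv v h).2 rfl
  have hST : Disjoint (S \ S₀) T := by
    rw [Finset.disjoint_left]
    intro w hw hwT
    obtain ⟨_, _, h1, _⟩ := (hmemS w).1 (Finset.mem_sdiff.1 hw).1
    obtain ⟨_, _, _, h2⟩ := (hmemT w).1 hwT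
    rw [h1] at h2; norm_num at h2
  have hS₀Q : ∀ w ∈ S₀, w ∉ Q := by
    intro w hw hwQ
    rcases Finset.mem_union.1 hwQ with h | h
    · exact (Finset.mem_sdiff.1 h).2 hw
    · obtain ⟨_, _, h1, _⟩ := (hmemS w).1 (hS₀sub hw)
      obtain ⟨_, _, _, h2⟩ := (hmemT w).1 h
      rw [h1] at h2; norm_num at h2
  -- the switched matrix B
  set r : Fin (n + 1) → Fin (n + 1) → Fin (n + 1) :=
    fun a b => if a = u ∧ b ∈ Q then v else if a = v ∧ b ∈ Q then u else a with hrdef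
  set B : Matrix (Fin (n + 1)) (Fin (n + 1)) ℝ :=
    Matrix.of (fun a b => A (r a b) (r b a)) with hBdef
  have hBapp : ∀ a b, B a b = A (r a b) (r b a) := fun a b => rfl
  have hr_other : ∀ a b, a ≠ u → a ≠ v → r a b = a := by
    intro a b h1 h2; simp [hrdef, h1, h2]
  have hr_notQ : ∀ a b, b ∉ Q → r a b = a := by
    intro a b hb; simp [hrdef, hb]
  have hr_u : ∀ b, r u b = if b ∈ Q then v else u := by
    intro b; by_cases h : b ∈ Q <;> simp [hrdef, h, hij]
  have hr_v : ∀ b, r v b = if b ∈ Q then u else v := by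
    intro b; by_cases h : b ∈ Q <;> simp [hrdef, h, hij.symm]
  -- entry lemmas for B
  have hB_u : ∀ b, B u b = if b ∈ Q then A v b else A u b := by
    intro b
    rw [hBapp, hr_u]
    by_cases h : b ∈ Q
    · obtain ⟨hb1, hb2⟩ := hQnotuv b h
      rw [if_pos h, if_pos h, hr_other b u hb1 hb2]
    · rw [if_neg h, if_neg h, hr_notQ b u huQ]
  have hB_v : ∀ b, B v b = if b ∈ Q then A u b else A v b := by
    intro b
    rw [hBapp, hr_v]
    by_cases h : b ∈ Q
    · obtain ⟨hb1, hb2⟩ := hQnotuv b h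
      rw [if_pos h, if_pos h, hr_other b v hb1 hb2]
    · rw [if_neg h, if_neg h, hr_notQ b v hvQ]
  have hB_RR : ∀ a b, a ≠ u → a ≠ v → b ≠ u → b ≠ v → B a b = A a b := by
    intro a b ha1 ha2 hb1 hb2
    rw [hBapp, hr_other a b ha1 ha2, hr_other b a hb1 hb2]
  have hB_notQ_row : ∀ a b, a ≠ u → a ≠ v → a ∉ Q → B a b = A a b := by
    intro a b ha1 ha2 haQ
    rw [hBapp, hr_other a b ha1 ha2, hr_notQ b a haQ]
  have hB_Q_row : ∀ a b, a ∈ Q → B a b = A a (Equiv.swap u v b) := by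
    intro a b ha
    obtain ⟨ha1, ha2⟩ := hQnotuv a ha
    rw [hBapp, hr_other a b ha1 ha2]
    congr 1
    rw [Equiv.swap_apply_def, hrdef]
    simp only [ha]
    by_cases hb1 : b = u
    · simp [hb1]
    · by_cases hb2 : b = v <;> simp [hb1, hb2]
  have hBsymm : ∀ a b, B a b = B b a := by
    intro a b
    rw [hBapp, hBapp, hs (r a b) (r b a)]
  -- B ∈ M(D)
  have hB01 : ∀ a b, B a b = 0 ∨ B a b = 1 := fun a b => hA01 _ _
  have hBdiag : ∀ a, B a a = 0 := by
    intro a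
    by_cases h : a ∈ Q
    · obtain ⟨h1, h2⟩ := hQnotuv a h
      rw [hBapp, hr_other a a h1 h2, hAdiag]
    · rw [hBapp, hr_notQ a a h, hAdiag]
  have hB_IsSymm : B.IsSymm := Matrix.IsSymm.ext (fun a b => hBsymm b a)
  -- row sums
  have hQsum1 : ∑ b ∈ Q, (A v b - A u b) = 0 := by
    rw [hQdef, Finset.sum_union hST]
    have e1 : ∑ b ∈ S \ S₀, (A v b - A u b) = -(((S \ S₀).card : ℝ)) := by
      have hval : ∀ b ∈ S \ S₀, A v b - A u b = -1 := by
        intro b hb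
        obtain ⟨_, _, h1, h2⟩ := (hmemS b).1 (Finset.mem_sdiff.1 hb).1
        rw [h1, h2]; norm_num
      rw [Finset.sum_congr rfl hval, Finset.sum_const]
      simp
    have e2 : ∑ b ∈ T, (A v b - A u b) = (T.card : ℝ) := by
      have hval : ∀ b ∈ T, A v b - A u b = 1 := by
        intro b hb
        obtain ⟨_, _, h1, h2⟩ := (hmemT b).1 hb
        rw [h1, h2]; norm_num
      rw [Finset.sum_congr rfl hval, Finset.sum_const]
      simp
    rw [e1, e2, hS1card]; ring
  have hBrow : ∀ a, ∑ b, B a b = (D a : ℝ) := by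
    intro a
    by_cases hau : a = u
    · subst hau
      have e1 : ∀ b, B a b = A a b + (if b ∈ Q then A v b - A a b else 0) := by
        intro b
        rw [hB_u b]
        by_cases h : b ∈ Q
        · rw [if_pos h, if_pos h]; ring
        · rw [if_neg h, if_neg h]; ring
      rw [Finset.sum_congr rfl (fun b _ => e1 b), Finset.sum_add_distrib, hArow,
        Finset.sum_ite_mem, Finset.univ_inter, hQsum1, add_zero]
    · by_cases hav : a = v
      · subst hav
        have e1 : ∀ b, B a b = A a b + (if b ∈ Q then A u b - A a b else 0) := by
          intro b
          rw [hB_v b]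
          by_cases h : b ∈ Q
          · rw [if_pos h, if_pos h]; ring
          · rw [if_neg h, if_neg h]; ring
        have hQsum2 : ∑ b ∈ Q, (A u b - A a b) = 0 := by
          have : ∑ b ∈ Q, (A u b - A a b) = -∑ b ∈ Q, (A a b - A u b) := by
            rw [← Finset.sum_neg_distrib]
            apply Finset.sum_congr rfl
            intro b _; ring
          rw [this, hQsum1, neg_zero]
        rw [Finset.sum_congr rfl (fun b _ => e1 b), Finset.sum_add_distrib, hArow,
          Finset.sum_ite_mem, Finset.univ_inter, hQsum2, add_zero]
      · by_cases haQ : a ∈ Q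
        · have e1 : ∀ b, B a b = A a (Equiv.swap u v b) := fun b => hB_Q_row a b haQ
          rw [Finset.sum_congr rfl (fun b _ => e1 b),
            Equiv.sum_comp (Equiv.swap u v) (fun b => A a b), hArow]
        · have e1 : ∀ b, B a b = A a b := fun b => hB_notQ_row a b hau hav haQ
          rw [Finset.sum_congr rfl (fun b _ => e1 b), hArow]
  have hBmem : MemMD D B := ⟨hB01, hB_IsSymm, hBdiag, hBrow⟩
  -- the swapped vector y
  set y : Fin (n + 1) → ℝ := fun b => X (Equiv.swap u v b) with hydef
  have hyu : y u = X v := by rw [hydef]; simp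
  have hyv : y v = X u := by rw [hydef]; simp
  have hyo : ∀ b, b ≠ u → b ≠ v → y b = X b := by
    intro b h1 h2
    rw [hydef]
    simp [Equiv.swap_apply_of_ne_of_ne h1 h2]
  have hyunit : (∑ t, y t ^ 2) = 1 := by
    rw [hydef]
    rw [Equiv.sum_comp (Equiv.swap u v) (fun b => X b ^ 2)]
    exact hXunit
  -- lam1 A = Rayleigh quotient of X
  have hXX : dotProduct X X = 1 := by
    have : dotProduct X X = ∑ t, X t ^ 2 := by
      simp [dotProduct, sq]
    rw [this, hXunit]
  have hlamA : dotProduct X (A.mulVec X) = lam1 A := by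
    rw [hXeig, dotProduct_smul, smul_eq_mul, hXX, mul_one]
  -- boundedness and basic lam1 inequalities
  have hbddB : BddAbove {r | ∃ z : Fin (n + 1) → ℝ,
      (∑ t, z t ^ 2) = 1 ∧ r = dotProduct z (B.mulVec z)} := by
    refine ⟨((n : ℝ) + 1), ?_⟩
    rintro rr ⟨z, hz, rfl⟩
    have := quad_bound B hB01 z hz
    push_cast at this
    linarith
  have hyB_le : dotProduct y (B.mulVec y) ≤ lam1 B :=
    le_csSup hbddB ⟨y, hyunit, rfl⟩
  have hBA : lam1 B ≤ lam1 A := hmax B hBmem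
  -- key identity
  have hkey : dotProduct y (B.mulVec y)
      = dotProduct X (A.mulVec X) + 2 * ((X v - X u) * ∑ w ∈ S₀, X w) := by
    set G : Fin (n + 1) → Fin (n + 1) → ℝ :=
      fun a b => y a * (B a b * y b) - X a * (A a b * X b) with hGdef
    have hdotB : dotProduct y (B.mulVec y) = ∑ a, ∑ b, y a * (B a b * y b) := by
      simp [dotProduct, Matrix.mulVec, Finset.mul_sum]
    have hdotA : dotProduct X (A.mulVec X) = ∑ a, ∑ b, X a * (A a b * X b) := by
      simp [dotProduct, Matrix.mulVec, Finset.mul_sum]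
    have hdiff : dotProduct y (B.mulVec y) - dotProduct X (A.mulVec X)
        = ∑ a, ∑ b, G a b := by
      rw [hdotB, hdotA, ← Finset.sum_sub_distrib]
      apply Finset.sum_congr rfl
      intro a _
      rw [← Finset.sum_sub_distrib]
    have hGsymm : ∀ a b, G b a = G a b := by
      intro a b
      simp only [hGdef]
      rw [hBsymm b a, hs b a]
      ring
    have hGRR : ∀ a ∈ R, ∀ b ∈ R, G a b = 0 := by
      intro a ha b hb
      obtain ⟨ha1, ha2⟩ := (hmemR a).1 ha
      obtain ⟨hb1, hb2⟩ := (hmemR b).1 hb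
      simp only [hGdef]
      rw [hB_RR a b ha1 ha2 hb1 hb2, hyo a ha1 ha2, hyo b hb1 hb2]
      ring
    have hGuu : G u u = 0 := by
      simp only [hGdef]
      rw [hBdiag u, hAdiag u]; ring
    have hGvv : G v v = 0 := by
      simp only [hGdef]
      rw [hBdiag v, hAdiag v]; ring
    have hGuv : G u v = 0 := by
      simp only [hGdef]
      rw [hB_u v, if_neg hvQ, hyu, hyv]; ring
    have hGvu : G v u = 0 := (hGsymm u v).trans hGuv
    have hstep1 : ∑ a, ∑ b, G a b
        = (∑ b ∈ R, G u b) + (∑ b ∈ R, G v b) + ∑ a ∈ R, (G a u + G a v) := by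
      rw [sum_split hij (fun a => ∑ b, G a b), sum_split hij (G u),
        sum_split hij (G v), ← hRdef]
      have : ∑ a ∈ R, ∑ b, G a b = ∑ a ∈ R, (G a u + G a v) := by
        apply Finset.sum_congr rfl
        intro a ha
        rw [sum_split hij (G a), ← hRdef]
        rw [Finset.sum_eq_zero (fun b hb => hGRR a ha b hb)]
        ring
      rw [this, hGuu, hGvv, hGuv, hGvu]
      ring
    have hstep2 : ∑ a ∈ R, (G a u + G a v) = (∑ b ∈ R, G u b) + (∑ b ∈ R, G v b) := by
      rw [Finset.sum_add_distrib]
      congr 1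
      · apply Finset.sum_congr rfl; intro a _; exact hGsymm u a
      · apply Finset.sum_congr rfl; intro a _; exact hGsymm v a
    have hRval : ∀ b ∈ R, G u b + G v b
        = if b ∈ Q then 0 else (X v - X u) * ((A u b - A v b) * X b) := by
      intro b hb
      obtain ⟨hb1, hb2⟩ := (hmemR b).1 hb
      simp only [hGdef]
      rw [hB_u b, hB_v b, hyu, hyv, hyo b hb1 hb2]
      by_cases h : b ∈ Q
      · rw [if_pos h, if_pos h, if_pos h]; ring
      · rw [if_neg h, if_neg h, if_neg h]; ring
    have hsumR : ∑ b ∈ R, (G u b + G v b) = (X v - X u) * ∑ w ∈ S₀, X w := by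
      rw [Finset.sum_congr rfl hRval]
      have e1 : ∑ b ∈ R, (if b ∈ Q then (0:ℝ) else (X v - X u) * ((A u b - A v b) * X b))
          = ∑ b ∈ R.filter (fun b => b ∉ Q), (X v - X u) * ((A u b - A v b) * X b) := by
        rw [Finset.sum_filter]
        apply Finset.sum_congr rfl
        intro b _
        by_cases h : b ∈ Q <;> simp [h]
      rw [e1, ← Finset.mul_sum]
      congr 1
      have hsub : S₀ ⊆ R.filter (fun b => b ∉ Q) := by
        intro w hw
        rw [Finset.mem_filter]
        exact ⟨hSR (hS₀sub hw), hS₀Q w hw⟩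
      rw [← Finset.sum_subset hsub ?_]
      · apply Finset.sum_congr rfl
        intro w hw
        obtain ⟨_, _, h1, h2⟩ := (hmemS w).1 (hS₀sub hw)
        rw [h1, h2]; ring
      · intro b hb hbS₀
        rw [Finset.mem_filter] at hb
        obtain ⟨hbR, hbQ⟩ := hb
        obtain ⟨hb1, hb2⟩ := (hmemR b).1 hbR
        have hbS : b ∉ S := by
          intro hbS
          exact hbQ (Finset.mem_union_left _ (Finset.mem_sdiff.2 ⟨hbS, hbS₀⟩))
        have hbT : b ∉ T := fun hbT => hbQ (Finset.mem_union_right _ hbT)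
        rcases hA01 u b with h1 | h1 <;> rcases hA01 v b with h2 | h2
        · rw [h1, h2]; ring
        · exact absurd ((hmemT b).2 ⟨hb1, hb2, h2, h1⟩) hbT
        · exact absurd ((hmemS b).2 ⟨hb1, hb2, h1, h2⟩) hbS
        · rw [h1, h2]; ring
    have : dotProduct y (B.mulVec y) - dotProduct X (A.mulVec X)
        = 2 * ((X v - X u) * ∑ w ∈ S₀, X w) := by
      have hsum2 : (∑ b ∈ R, G u b) + (∑ b ∈ R, G v b)
          = (X v - X u) * ∑ w ∈ S₀, X w := by
        rw [← Finset.sum_add_distrib]; exact hsumR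
      rw [hdiff, hstep1, hstep2, hsum2]
      ring
    linarith [this]
  -- final case analysis
  by_cases hxw : 0 < X w₀
  · have hposS₀ : 0 < ∑ w ∈ S₀, X w :=
      lt_of_lt_of_le hxw (Finset.single_le_sum (fun w _ => hXnn w) hw₀S₀)
    have h1 : lam1 A < dotProduct y (B.mulVec y) := by
      rw [hkey, hlamA]
      nlinarith [hposS₀, sub_pos.2 hlt]
    linarith [hyB_le, hBA]
  · have hall0 : ∀ w ∈ S, X w = 0 := by
      intro w hw
      have h1 : X w ≤ X w₀ := hw₀max w hw
      have h2 : X w₀ ≤ 0 := not_lt.1 hxw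
      exact le_antisymm (h1.trans h2) (hXnn w)
    have hS₀0 : ∑ w ∈ S₀, X w = 0 :=
      Finset.sum_eq_zero fun w hw => hall0 w (hS₀sub hw)
    have hyBy : dotProduct y (B.mulVec y) = lam1 A := by
      rw [hkey, hS₀0, hlamA]; ring
    have hub : ∀ z : Fin (n + 1) → ℝ, (∑ t, z t ^ 2) = 1 →
        dotProduct z (B.mulVec z) ≤ lam1 A := by
      intro z hz
      have h1 : dotProduct z (B.mulVec z) ≤ lam1 B :=
        le_csSup hbddB ⟨z, hz, rfl⟩
      linarith [hBA]
    have heig := eig_of_max B hBsymm (lam1 A) hub y hyunit hyBy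
    obtain ⟨hw₀u, hw₀v, hAw₀1, hAw₀2⟩ := (hmemS w₀).1 hw₀S
    have hyw₀ : y w₀ = 0 := by rw [hyo w₀ hw₀u hw₀v]; exact hall0 w₀ hw₀S
    have hXw₀ : X w₀ = 0 := hall0 w₀ hw₀S
    have hlhs : (B.mulVec y) w₀ = lam1 A * y w₀ := by
      rw [heig]; simp
    rw [hyw₀, mul_zero] at hlhs
    -- compute (B.mulVec y) w₀ directly
    have hw₀Q : w₀ ∉ Q := hS₀Q w₀ hw₀S₀
    have hrow : ∀ b, B w₀ b = A w₀ b := fun b => hB_notQ_row w₀ b hw₀u hw₀v hw₀Q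
    have hAXw₀ : ∑ b, A w₀ b * X b = 0 := by
      have := congrFun hXeig w₀
      simp only [Matrix.mulVec, dotProduct, Pi.smul_apply, smul_eq_mul] at this
      rw [this, hXw₀, mul_zero]
    have hcompute : (B.mulVec y) w₀ = X v - X u := by
      have e0 : (B.mulVec y) w₀ = ∑ b, A w₀ b * y b := by
        simp only [Matrix.mulVec, dotProduct]
        apply Finset.sum_congr rfl
        intro b _
        rw [hrow b]
      rw [e0]
      have e1 : ∑ b, A w₀ b * y b
          = ∑ b, (A w₀ b * X b + (if b = u then A w₀ u * (X v - X u)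
              else if b = v then A w₀ v * (X u - X v) else 0)) := by
        apply Finset.sum_congr rfl
        intro b _
        by_cases h1 : b = u
        · subst h1; rw [if_pos rfl, hyu]; ring
        · by_cases h2 : b = v
          · subst h2; rw [if_neg h1, if_pos rfl, hyv]; ring
          · rw [if_neg h1, if_neg h2, hyo b h1 h2]; ring
      rw [e1, Finset.sum_add_distrib, hAXw₀, zero_add,
        sum_split hij (fun b => if b = u then A w₀ u * (X v - X u)
          else if b = v then A w₀ v * (X u - X v) else 0), ← hRdef]
      have e2 : ∑ b ∈ R, (if b = u then A w₀ u * (X v - X u)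
          else if b = v then A w₀ v * (X u - X v) else 0) = 0 := by
        apply Finset.sum_eq_zero
        intro b hb
        obtain ⟨hb1, hb2⟩ := (hmemR b).1 hb
        rw [if_neg hb1, if_neg hb2]
      rw [e2]
      simp only [if_pos rfl, if_neg hij.symm]
      rw [hs u w₀, hs v w₀, hAw₀1, hAw₀2]
      simp
    rw [hcompute] at hlhs
    linarith [hlhs]
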